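/- Let T : L^p(μ) → L^p(ν) be a surjective linear isometry, 1 ≤ p < ∞, p ≠ 2, between L^p spaces of measure spaces. If f, g ∈ L^p(μ) have disjoint supports (f·g = 0 a.e.), then Tf and Tg have disjoint supports. -/

import Mathlib

open MeasureTheory ENNReal

section PointwiseClarkson

private lemma rpow_split {w r : ℝ} (hw : 0 < w) : w ^ r = w * w ^ (r - 1) := by
  calc w ^ r = w ^ ((1 : ℝ) + (r - 1)) := by ring_nf
  _ = w ^ (1 : ℝ) * w ^ (r - 1) := Real.rpow_add hw _ _
  _ = w * w ^ (r - 1) := by rw [Real.rpow_one]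

/-- strict subadditivity of `x ^ r` for `0 < r < 1`. -/
private lemma rpow_add_lt {u v r : ℝ} (hu : 0 < u) (hv : 0 < v) (hr0 : 0 < r) (hr1 : r < 1) :
    (u + v) ^ r < u ^ r + v ^ r := by
  have huv : 0 < u + v := by linarith
  have key : ∀ w : ℝ, 0 < w → w < u + v → w * (u + v) ^ (r - 1) < w ^ r := by
    intro w hw hwlt
    have h1 : (u + v) ^ (r - 1) < w ^ (r - 1) :=
      Real.rpow_lt_rpow_of_neg hw hwlt (by linarith)
    calc w * (u + v) ^ (r - 1) < w * w ^ (r - 1) := mul_lt_mul_of_pos_left h1 hw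
    _ = w ^ r := (rpow_split hw).symm
  have hu' := key u hu (by linarith)
  have hv' := key v hv (by linarith)
  have : (u + v) ^ r = u * (u + v) ^ (r - 1) + v * (u + v) ^ (r - 1) := by
    rw [← add_mul]; exact rpow_split huv
  linarith

/-- strict superadditivity of `x ^ r` for `r > 1`. -/
private lemma rpow_add_gt {u v r : ℝ} (hu : 0 < u) (hv : 0 < v) (hr1 : 1 < r) :
    u ^ r + v ^ r < (u + v) ^ r := by
  have huv : 0 < u + v := by linarith
  have key : ∀ w : ℝ, 0 < w → w < u + v → w ^ r < w * (u + v) ^ (r - 1) := by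
    intro w hw hwlt
    have h1 : w ^ (r - 1) < (u + v) ^ (r - 1) :=
      Real.rpow_lt_rpow hw.le hwlt (by linarith)
    calc w ^ r = w * w ^ (r - 1) := rpow_split hw
    _ < w * (u + v) ^ (r - 1) := mul_lt_mul_of_pos_left h1 hw
  have hu' := key u hu (by linarith)
  have hv' := key v hv (by linarith)
  have : (u + v) ^ r = u * (u + v) ^ (r - 1) + v * (u + v) ^ (r - 1) := by
    rw [← add_mul]; exact rpow_split huv
  linarith

private lemma rpow_add_le {u v r : ℝ} (hu : 0 ≤ u) (hv : 0 ≤ v) (hr0 : 0 < r) (hr1 : r ≤ 1) :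
    (u + v) ^ r ≤ u ^ r + v ^ r := by
  rcases eq_or_lt_of_le hu with rfl | hu
  · simp [Real.zero_rpow hr0.ne']
  rcases eq_or_lt_of_le hv with rfl | hv
  · simp [Real.zero_rpow hr0.ne']
  rcases eq_or_lt_of_le hr1 with rfl | hr1
  · simp
  · exact (rpow_add_lt hu hv hr0 hr1).le

private lemma rpow_add_ge {u v r : ℝ} (hu : 0 ≤ u) (hv : 0 ≤ v) (hr1 : 1 ≤ r) :
    u ^ r + v ^ r ≤ (u + v) ^ r := by
  have hr0 : 0 < r := by linarith
  rcases eq_or_lt_of_le hu with rfl | hu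
  · simp [Real.zero_rpow hr0.ne']
  rcases eq_or_lt_of_le hv with rfl | hv
  · simp [Real.zero_rpow hr0.ne']
  rcases eq_or_lt_of_le hr1 with rfl | hr1
  · simp
  · exact (rpow_add_gt hu hv hr1).le

private lemma concave_mid {x y r : ℝ} (hx : 0 ≤ x) (hy : 0 ≤ y) (hr0 : 0 ≤ r) (hr1 : r ≤ 1) :
    x ^ r + y ^ r ≤ 2 * ((x + y) / 2) ^ r := by
  have h := (Real.concaveOn_rpow hr0 hr1).2 (Set.mem_Ici.2 hx) (Set.mem_Ici.2 hy)
    (by norm_num : (0:ℝ) ≤ 1/2) (by norm_num : (0:ℝ) ≤ 1/2) (by norm_num)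
  simp only [smul_eq_mul] at h
  have e : (1/2 : ℝ) * x + (1/2 : ℝ) * y = (x + y) / 2 := by ring
  rw [e] at h
  linarith

private lemma convex_mid {x y r : ℝ} (hx : 0 ≤ x) (hy : 0 ≤ y) (hr1 : 1 ≤ r) :
    2 * ((x + y) / 2) ^ r ≤ x ^ r + y ^ r := by
  have h := (convexOn_rpow hr1).2 (Set.mem_Ici.2 hx) (Set.mem_Ici.2 hy)
    (by norm_num : (0:ℝ) ≤ 1/2) (by norm_num : (0:ℝ) ≤ 1/2) (by norm_num)
  simp only [smul_eq_mul] at h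
  have e : (1/2 : ℝ) * x + (1/2 : ℝ) * y = (x + y) / 2 := by ring
  rw [e] at h
  linarith

private lemma norm_rpow_as_sq (c : ℂ) {q : ℝ} : ‖c‖ ^ q = (‖c‖ * ‖c‖) ^ (q / 2) := by
  have : ‖c‖ * ‖c‖ = ‖c‖ ^ (2 : ℝ) := by
    rw [show (2:ℝ) = ((2:ℕ):ℝ) by norm_num, Real.rpow_natCast]; ring
  rw [this, ← Real.rpow_mul (norm_nonneg c), show (2:ℝ) * (q/2) = q by ring]

private lemma parallelogram_c (a b : ℂ) :
    ‖a + b‖ * ‖a + b‖ + ‖a - b‖ * ‖a - b‖ = 2 * (‖a‖ * ‖a‖ + ‖b‖ * ‖b‖) := by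
  have h := parallelogram_law_with_norm ℂ a b
  simp only [sq] at h
  exact h

/-- Clarkson-type inequality, `1 ≤ q ≤ 2`. -/
private lemma clarkson_le {q : ℝ} (hq0 : 0 < q) (hq2 : q ≤ 2) (a b : ℂ) :
    ‖a + b‖ ^ q + ‖a - b‖ ^ q ≤ 2 * ‖a‖ ^ q + 2 * ‖b‖ ^ q := by
  set r := q / 2 with hr
  have hr0 : 0 < r := by positivity
  have hr1 : r ≤ 1 := by rw [hr]; linarith
  have h1 : ‖a + b‖ ^ q + ‖a - b‖ ^ q
      ≤ 2 * ((‖a + b‖ * ‖a + b‖ + ‖a - b‖ * ‖a - b‖) / 2) ^ r := by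
    rw [norm_rpow_as_sq (a+b), norm_rpow_as_sq (a-b)]
    exact concave_mid (by positivity) (by positivity) hr0.le hr1
  rw [parallelogram_c] at h1
  have e : (2 * (‖a‖ * ‖a‖ + ‖b‖ * ‖b‖)) / 2 = ‖a‖ * ‖a‖ + ‖b‖ * ‖b‖ := by ring
  rw [e] at h1
  have h2 : (‖a‖ * ‖a‖ + ‖b‖ * ‖b‖) ^ r ≤ (‖a‖ * ‖a‖) ^ r + (‖b‖ * ‖b‖) ^ r :=
    rpow_add_le (by positivity) (by positivity) hr0 hr1
  rw [← norm_rpow_as_sq a, ← norm_rpow_as_sq b] at h2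
  linarith

/-- Strict Clarkson, `1 ≤ q < 2`, both nonzero. -/
private lemma clarkson_lt {q : ℝ} (hq0 : 0 < q) (hq2 : q < 2) {a b : ℂ}
    (ha : a ≠ 0) (hb : b ≠ 0) :
    ‖a + b‖ ^ q + ‖a - b‖ ^ q < 2 * ‖a‖ ^ q + 2 * ‖b‖ ^ q := by
  set r := q / 2 with hr
  have hr0 : 0 < r := by positivity
  have hr1 : r < 1 := by rw [hr]; linarith
  have h1 : ‖a + b‖ ^ q + ‖a - b‖ ^ q
      ≤ 2 * ((‖a + b‖ * ‖a + b‖ + ‖a - b‖ * ‖a - b‖) / 2) ^ r := by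
    rw [norm_rpow_as_sq (a+b), norm_rpow_as_sq (a-b)]
    exact concave_mid (by positivity) (by positivity) hr0.le hr1.le
  rw [parallelogram_c] at h1
  have e : (2 * (‖a‖ * ‖a‖ + ‖b‖ * ‖b‖)) / 2 = ‖a‖ * ‖a‖ + ‖b‖ * ‖b‖ := by ring
  rw [e] at h1
  have hna : 0 < ‖a‖ * ‖a‖ := by
    have := norm_pos_iff.2 ha; positivity
  have hnb : 0 < ‖b‖ * ‖b‖ := by
    have := norm_pos_iff.2 hb; positivity
  have h2 : (‖a‖ * ‖a‖ + ‖b‖ * ‖b‖) ^ r < (‖a‖ * ‖a‖) ^ r + (‖b‖ * ‖b‖) ^ r :=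
    rpow_add_lt hna hnb hr0 hr1
  rw [← norm_rpow_as_sq a, ← norm_rpow_as_sq b] at h2
  linarith

/-- Clarkson-type inequality, `q ≥ 2`. -/
private lemma clarkson_ge {q : ℝ} (hq2 : 2 ≤ q) (a b : ℂ) :
    2 * ‖a‖ ^ q + 2 * ‖b‖ ^ q ≤ ‖a + b‖ ^ q + ‖a - b‖ ^ q := by
  set r := q / 2 with hr
  have hr1 : 1 ≤ r := by rw [hr]; linarith
  have h1 : 2 * ((‖a + b‖ * ‖a + b‖ + ‖a - b‖ * ‖a - b‖) / 2) ^ r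
      ≤ ‖a + b‖ ^ q + ‖a - b‖ ^ q := by
    rw [norm_rpow_as_sq (a+b), norm_rpow_as_sq (a-b)]
    exact convex_mid (by positivity) (by positivity) hr1
  rw [parallelogram_c] at h1
  have e : (2 * (‖a‖ * ‖a‖ + ‖b‖ * ‖b‖)) / 2 = ‖a‖ * ‖a‖ + ‖b‖ * ‖b‖ := by ring
  rw [e] at h1
  have h2 : (‖a‖ * ‖a‖) ^ r + (‖b‖ * ‖b‖) ^ r ≤ (‖a‖ * ‖a‖ + ‖b‖ * ‖b‖) ^ r :=
    rpow_add_ge (by positivity) (by positivity) hr1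
  rw [← norm_rpow_as_sq a, ← norm_rpow_as_sq b] at h2
  linarith

/-- Strict Clarkson, `q > 2`, both nonzero. -/
private lemma clarkson_gt {q : ℝ} (hq2 : 2 < q) {a b : ℂ}
    (ha : a ≠ 0) (hb : b ≠ 0) :
    2 * ‖a‖ ^ q + 2 * ‖b‖ ^ q < ‖a + b‖ ^ q + ‖a - b‖ ^ q := by
  set r := q / 2 with hr
  have hr1 : 1 < r := by rw [hr]; linarith
  have h1 : 2 * ((‖a + b‖ * ‖a + b‖ + ‖a - b‖ * ‖a - b‖) / 2) ^ r
      ≤ ‖a + b‖ ^ q + ‖a - b‖ ^ q := by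
    rw [norm_rpow_as_sq (a+b), norm_rpow_as_sq (a-b)]
    exact convex_mid (by positivity) (by positivity) hr1.le
  rw [parallelogram_c] at h1
  have e : (2 * (‖a‖ * ‖a‖ + ‖b‖ * ‖b‖)) / 2 = ‖a‖ * ‖a‖ + ‖b‖ * ‖b‖ := by ring
  rw [e] at h1
  have hna : 0 < ‖a‖ * ‖a‖ := by
    have := norm_pos_iff.2 ha; positivity
  have hnb : 0 < ‖b‖ * ‖b‖ := by
    have := norm_pos_iff.2 hb; positivity
  have h2 : (‖a‖ * ‖a‖) ^ r + (‖b‖ * ‖b‖) ^ r < (‖a‖ * ‖a‖ + ‖b‖ * ‖b‖) ^ r :=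
    rpow_add_gt hna hnb hr1
  rw [← norm_rpow_as_sq a, ← norm_rpow_as_sq b] at h2
  linarith

/-- equality when `a * b = 0`. -/
private lemma clarkson_eq_of_mul_zero {q : ℝ} (hq0 : 0 < q) {a b : ℂ} (hab : a * b = 0) :
    ‖a + b‖ ^ q + ‖a - b‖ ^ q = 2 * ‖a‖ ^ q + 2 * ‖b‖ ^ q := by
  rcases mul_eq_zero.1 hab with rfl | rfl
  · simp [norm_neg, Real.zero_rpow hq0.ne']; ring
  · simp [Real.zero_rpow hq0.ne']; ring

end PointwiseClarkson

section LpLemmas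

variable {Ω : Type*} [MeasurableSpace Ω] {m : Measure Ω} {p : ℝ≥0∞}

private lemma norm_rpow_eq_integral [Fact (1 ≤ p)] (hp_top : p ≠ ∞) (u : Lp ℂ p m) :
    ‖u‖ ^ p.toReal = ∫ ω, ‖(u : Ω → ℂ) ω‖ ^ p.toReal ∂m := by
  have hp0 : p ≠ 0 := by
    intro h; have := (Fact.out : 1 ≤ p); simp [h] at this
  have hq0 : 0 < p.toReal := ENNReal.toReal_pos hp0 hp_top
  have hI : 0 ≤ ∫ ω, ‖(u : Ω → ℂ) ω‖ ^ p.toReal ∂m :=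
    integral_nonneg fun ω => by positivity
  rw [Lp.norm_def, (Lp.memLp u).eLpNorm_eq_integral_rpow_norm hp0 hp_top,
    ENNReal.toReal_ofReal (by positivity), ← Real.rpow_mul hI,
    inv_mul_cancel₀ hq0.ne', Real.rpow_one]

end LpLemmas

section LpLemmas2

variable {Ω : Type*} [MeasurableSpace Ω] {m : Measure Ω} {p : ℝ≥0∞}

private lemma integrableD [Fact (1 ≤ p)] (hp_top : p ≠ ∞) (u v : Lp ℂ p m) :
    Integrable (fun ω => ‖(u : Ω → ℂ) ω + (v : Ω → ℂ) ω‖ ^ p.toReal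
        + ‖(u : Ω → ℂ) ω - (v : Ω → ℂ) ω‖ ^ p.toReal
        - 2 * ‖(u : Ω → ℂ) ω‖ ^ p.toReal - 2 * ‖(v : Ω → ℂ) ω‖ ^ p.toReal) m := by
  have hp0 : p ≠ 0 := by
    intro h; have := (Fact.out : 1 ≤ p); simp [h] at this
  have iu := (Lp.memLp u).integrable_norm_rpow hp0 hp_top
  have iv := (Lp.memLp v).integrable_norm_rpow hp0 hp_top
  have iadd : Integrable (fun ω => ‖(u : Ω → ℂ) ω + (v : Ω → ℂ) ω‖ ^ p.toReal) m := by
    refine ((Lp.memLp (u + v)).integrable_norm_rpow hp0 hp_top).congr ?_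
    filter_upwards [Lp.coeFn_add u v] with ω h
    rw [h]; rfl
  have isub : Integrable (fun ω => ‖(u : Ω → ℂ) ω - (v : Ω → ℂ) ω‖ ^ p.toReal) m := by
    refine ((Lp.memLp (u - v)).integrable_norm_rpow hp0 hp_top).congr ?_
    filter_upwards [Lp.coeFn_sub u v] with ω h
    rw [h]; rfl
  exact ((iadd.add isub).sub (iu.const_mul 2)).sub (iv.const_mul 2)

private lemma D_eq_integral [Fact (1 ≤ p)] (hp_top : p ≠ ∞) (u v : Lp ℂ p m) :
    ‖u + v‖ ^ p.toReal + ‖u - v‖ ^ p.toReal - 2 * ‖u‖ ^ p.toReal - 2 * ‖v‖ ^ p.toReal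
      = ∫ ω, (‖(u : Ω → ℂ) ω + (v : Ω → ℂ) ω‖ ^ p.toReal
          + ‖(u : Ω → ℂ) ω - (v : Ω → ℂ) ω‖ ^ p.toReal
          - 2 * ‖(u : Ω → ℂ) ω‖ ^ p.toReal - 2 * ‖(v : Ω → ℂ) ω‖ ^ p.toReal) ∂m := by
  have hp0 : p ≠ 0 := by
    intro h; have := (Fact.out : 1 ≤ p); simp [h] at this
  have iu := (Lp.memLp u).integrable_norm_rpow hp0 hp_top
  have iv := (Lp.memLp v).integrable_norm_rpow hp0 hp_top
  have iadd : Integrable (fun ω => ‖(u : Ω → ℂ) ω + (v : Ω → ℂ) ω‖ ^ p.toReal) m := by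
    refine ((Lp.memLp (u + v)).integrable_norm_rpow hp0 hp_top).congr ?_
    filter_upwards [Lp.coeFn_add u v] with ω h
    rw [h]; rfl
  have isub : Integrable (fun ω => ‖(u : Ω → ℂ) ω - (v : Ω → ℂ) ω‖ ^ p.toReal) m := by
    refine ((Lp.memLp (u - v)).integrable_norm_rpow hp0 hp_top).congr ?_
    filter_upwards [Lp.coeFn_sub u v] with ω h
    rw [h]; rfl
  have e1 : ‖u + v‖ ^ p.toReal = ∫ ω, ‖(u : Ω → ℂ) ω + (v : Ω → ℂ) ω‖ ^ p.toReal ∂m := by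
    rw [norm_rpow_eq_integral hp_top (u + v)]
    refine integral_congr_ae ?_
    filter_upwards [Lp.coeFn_add u v] with ω h
    rw [h]; rfl
  have e2 : ‖u - v‖ ^ p.toReal = ∫ ω, ‖(u : Ω → ℂ) ω - (v : Ω → ℂ) ω‖ ^ p.toReal ∂m := by
    rw [norm_rpow_eq_integral hp_top (u - v)]
    refine integral_congr_ae ?_
    filter_upwards [Lp.coeFn_sub u v] with ω h
    rw [h]; rfl
  have hre : ∫ ω, (‖(u : Ω → ℂ) ω + (v : Ω → ℂ) ω‖ ^ p.toReal
          + ‖(u : Ω → ℂ) ω - (v : Ω → ℂ) ω‖ ^ p.toReal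
          - 2 * ‖(u : Ω → ℂ) ω‖ ^ p.toReal - 2 * ‖(v : Ω → ℂ) ω‖ ^ p.toReal) ∂m
      = ∫ ω, ((‖(u : Ω → ℂ) ω + (v : Ω → ℂ) ω‖ ^ p.toReal
          + ‖(u : Ω → ℂ) ω - (v : Ω → ℂ) ω‖ ^ p.toReal)
          - (2 * ‖(u : Ω → ℂ) ω‖ ^ p.toReal + 2 * ‖(v : Ω → ℂ) ω‖ ^ p.toReal)) ∂m :=
    integral_congr_ae (Filter.Eventually.of_forall fun ω => by ring)
  have h1 : ∫ ω, ((‖(u : Ω → ℂ) ω + (v : Ω → ℂ) ω‖ ^ p.toReal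
          + ‖(u : Ω → ℂ) ω - (v : Ω → ℂ) ω‖ ^ p.toReal)
          - (2 * ‖(u : Ω → ℂ) ω‖ ^ p.toReal + 2 * ‖(v : Ω → ℂ) ω‖ ^ p.toReal)) ∂m
      = (∫ ω, (‖(u : Ω → ℂ) ω + (v : Ω → ℂ) ω‖ ^ p.toReal
          + ‖(u : Ω → ℂ) ω - (v : Ω → ℂ) ω‖ ^ p.toReal) ∂m)
        - ∫ ω, (2 * ‖(u : Ω → ℂ) ω‖ ^ p.toReal + 2 * ‖(v : Ω → ℂ) ω‖ ^ p.toReal) ∂m :=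
    integral_sub (iadd.add isub) ((iu.const_mul 2).add (iv.const_mul 2))
  have h2 : ∫ ω, (‖(u : Ω → ℂ) ω + (v : Ω → ℂ) ω‖ ^ p.toReal
          + ‖(u : Ω → ℂ) ω - (v : Ω → ℂ) ω‖ ^ p.toReal) ∂m
      = (∫ ω, ‖(u : Ω → ℂ) ω + (v : Ω → ℂ) ω‖ ^ p.toReal ∂m)
        + ∫ ω, ‖(u : Ω → ℂ) ω - (v : Ω → ℂ) ω‖ ^ p.toReal ∂m := integral_add iadd isub
  have h3 : ∫ ω, (2 * ‖(u : Ω → ℂ) ω‖ ^ p.toReal + 2 * ‖(v : Ω → ℂ) ω‖ ^ p.toReal) ∂m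
      = (∫ ω, 2 * ‖(u : Ω → ℂ) ω‖ ^ p.toReal ∂m)
        + ∫ ω, 2 * ‖(v : Ω → ℂ) ω‖ ^ p.toReal ∂m :=
    integral_add (iu.const_mul 2) (iv.const_mul 2)
  have h4 : ∫ ω, 2 * ‖(u : Ω → ℂ) ω‖ ^ p.toReal ∂m
      = 2 * ∫ ω, ‖(u : Ω → ℂ) ω‖ ^ p.toReal ∂m := integral_const_mul 2 _
  have h5 : ∫ ω, 2 * ‖(v : Ω → ℂ) ω‖ ^ p.toReal ∂m
      = 2 * ∫ ω, ‖(v : Ω → ℂ) ω‖ ^ p.toReal ∂m := integral_const_mul 2 _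
  rw [e1, e2, norm_rpow_eq_integral hp_top u, norm_rpow_eq_integral hp_top v]
  linarith

private lemma disjoint_of_D_zero [Fact (1 ≤ p)] (hp_top : p ≠ ∞) (hp2 : p.toReal ≠ 2)
    (u v : Lp ℂ p m)
    (hD : ‖u + v‖ ^ p.toReal + ‖u - v‖ ^ p.toReal
        - 2 * ‖u‖ ^ p.toReal - 2 * ‖v‖ ^ p.toReal = 0) :
    ∀ᵐ ω ∂m, (u : Ω → ℂ) ω * (v : Ω → ℂ) ω = 0 := by
  have hp0 : p ≠ 0 := by
    intro h; have := (Fact.out : 1 ≤ p); simp [h] at this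
  have hq0 : 0 < p.toReal := ENNReal.toReal_pos hp0 hp_top
  have hint : (∫ ω, (‖(u : Ω → ℂ) ω + (v : Ω → ℂ) ω‖ ^ p.toReal
      + ‖(u : Ω → ℂ) ω - (v : Ω → ℂ) ω‖ ^ p.toReal
      - 2 * ‖(u : Ω → ℂ) ω‖ ^ p.toReal - 2 * ‖(v : Ω → ℂ) ω‖ ^ p.toReal) ∂m) = 0 := by
    rw [← D_eq_integral hp_top u v]; exact hD
  have hInt := integrableD hp_top u v
  rcases lt_or_gt_of_ne hp2 with hqlt | hqgt
  · -- q < 2 : consider the nonnegative integrand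
    have hIntF : Integrable (fun ω => 2 * ‖(u : Ω → ℂ) ω‖ ^ p.toReal
        + 2 * ‖(v : Ω → ℂ) ω‖ ^ p.toReal
        - ‖(u : Ω → ℂ) ω + (v : Ω → ℂ) ω‖ ^ p.toReal
        - ‖(u : Ω → ℂ) ω - (v : Ω → ℂ) ω‖ ^ p.toReal) m := by
      refine hInt.neg.congr (Filter.Eventually.of_forall fun ω => ?_)
      simp only [Pi.neg_apply]
      ring
    have hintF : (∫ ω, (2 * ‖(u : Ω → ℂ) ω‖ ^ p.toReal
        + 2 * ‖(v : Ω → ℂ) ω‖ ^ p.toReal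
        - ‖(u : Ω → ℂ) ω + (v : Ω → ℂ) ω‖ ^ p.toReal
        - ‖(u : Ω → ℂ) ω - (v : Ω → ℂ) ω‖ ^ p.toReal) ∂m) = 0 := by
      have e : (∫ ω, (2 * ‖(u : Ω → ℂ) ω‖ ^ p.toReal
          + 2 * ‖(v : Ω → ℂ) ω‖ ^ p.toReal
          - ‖(u : Ω → ℂ) ω + (v : Ω → ℂ) ω‖ ^ p.toReal
          - ‖(u : Ω → ℂ) ω - (v : Ω → ℂ) ω‖ ^ p.toReal) ∂m)
          = ∫ ω, -((‖(u : Ω → ℂ) ω + (v : Ω → ℂ) ω‖ ^ p.toReal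
          + ‖(u : Ω → ℂ) ω - (v : Ω → ℂ) ω‖ ^ p.toReal
          - 2 * ‖(u : Ω → ℂ) ω‖ ^ p.toReal - 2 * ‖(v : Ω → ℂ) ω‖ ^ p.toReal)) ∂m :=
        integral_congr_ae (Filter.Eventually.of_forall fun ω => by ring)
      rw [e, integral_neg, hint, neg_zero]
    have hzero := (integral_eq_zero_iff_of_nonneg_ae
      (Filter.Eventually.of_forall fun ω => ?_) hIntF).1 hintF
    swap
    · have := clarkson_le hq0 hqlt.le ((u : Ω → ℂ) ω) ((v : Ω → ℂ) ω)
      simp only [Pi.zero_apply]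
      linarith
    filter_upwards [hzero] with ω h
    by_contra hne
    rcases mul_ne_zero_iff.1 hne with ⟨ha, hb⟩
    have := clarkson_lt hq0 hqlt ha hb
    simp only [Pi.zero_apply] at h
    linarith
  · -- q > 2
    have hzero := (integral_eq_zero_iff_of_nonneg_ae
      (Filter.Eventually.of_forall fun ω => ?_) hInt).1 hint
    swap
    · have := clarkson_ge hqgt.le ((u : Ω → ℂ) ω) ((v : Ω → ℂ) ω)
      simp only [Pi.zero_apply]
      linarith
    filter_upwards [hzero] with ω h
    by_contra hne
    rcases mul_ne_zero_iff.1 hne with ⟨ha, hb⟩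
    have := clarkson_gt hqgt ha hb
    simp only [Pi.zero_apply] at h
    linarith

end LpLemmas2

/-- A surjective linear isometry of `L^p` spaces, `1 ≤ p < ∞`, `p ≠ 2`,
preserves disjointness of supports. -/
theorem lp_isometry_preserves_disjoint_supports
    {Ω₁ Ω₂ : Type*} [MeasurableSpace Ω₁] [MeasurableSpace Ω₂]
    (μ : Measure Ω₁) (ν : Measure Ω₂)
    (p : ℝ≥0∞) [Fact (1 ≤ p)] (hp_top : p ≠ ∞) (hp2 : p.toReal ≠ 2)
    (T : Lp ℂ p μ ≃ₗᵢ[ℂ] Lp ℂ p ν)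
    (f g : Lp ℂ p μ)
    (hfg : ∀ᵐ ω ∂μ, (f : Ω₁ → ℂ) ω * (g : Ω₁ → ℂ) ω = 0) :
    ∀ᵐ ω ∂ν, (T f : Ω₂ → ℂ) ω * (T g : Ω₂ → ℂ) ω = 0 := by
  have hp0 : p ≠ 0 := by
    intro h; have := (Fact.out : 1 ≤ p); simp [h] at this
  set q := p.toReal with hqdef
  have hq0 : 0 < q := ENNReal.toReal_pos hp0 hp_top
  have hq1 : 1 ≤ q := by
    have h := ENNReal.toReal_mono hp_top (Fact.out : 1 ≤ p)
    simpa using h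
  -- the norm expression vanishes for f, g
  have hDfg : ‖f + g‖ ^ q + ‖f - g‖ ^ q - 2 * ‖f‖ ^ q - 2 * ‖g‖ ^ q = 0 := by
    rw [D_eq_integral hp_top f g]
    refine integral_eq_zero_of_ae ?_
    filter_upwards [hfg] with ω h
    have := clarkson_eq_of_mul_zero hq0 h
    simp only [Pi.zero_apply]
    linarith
  -- hence it vanishes for T f, T g
  have hDT : ‖T f + T g‖ ^ q + ‖T f - T g‖ ^ q - 2 * ‖T f‖ ^ q - 2 * ‖T g‖ ^ q = 0 := by
    rw [← map_add, ← map_sub, T.norm_map, T.norm_map, T.norm_map, T.norm_map]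
    exact hDfg
  exact disjoint_of_D_zero hp_top hp2 (T f) (T g) hDT
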